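/- Fix integers 1 ≤ n ≤ M and define T(t) = n · ∫₀^∞ e^{−y} · (1 − e^{−y})^{n−1} · (1 − e^{−t/y})^M dy for t > 0. Then lim_{t→0⁺} log T(t) / log t = n. -/

import Mathlib

open Filter Topology Set MeasureTheory Real

lemma aux0 {x : ℝ} (hx : 0 ≤ x) : 0 ≤ 1 - Real.exp (-x) := by
  have : Real.exp (-x) ≤ 1 := Real.exp_le_one_iff.2 (by linarith)
  linarith

lemma aux2 {x : ℝ} : 1 - Real.exp (-x) ≤ 1 := by
  have := Real.exp_pos (-x); linarith

lemma aux3 {x : ℝ} : 1 - Real.exp (-x) ≤ x := by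
  have := Real.add_one_le_exp (-x); linarith

lemma aux4 {x : ℝ} : x * Real.exp (-x) ≤ 1 - Real.exp (-x) := by
  have h1 := Real.add_one_le_exp x
  have h2 := Real.exp_pos (-x)
  have h3 : Real.exp (-x) * Real.exp x = 1 := by
    rw [← Real.exp_add]; simp
  nlinarith

lemma contF (M n : ℕ) (t : ℝ) :
    ContinuousOn (fun y : ℝ =>
      Real.exp (-y) * (1 - Real.exp (-y)) ^ n * (1 - Real.exp (-t / y)) ^ M) (Ioi 0) := by
  have hdiv : ContinuousOn (fun y : ℝ => -t / y) (Ioi 0) :=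
    continuousOn_const.div continuousOn_id (fun y hy => ne_of_gt hy)
  have h3 : ContinuousOn (fun y : ℝ => (1 - Real.exp (-t / y)) ^ M) (Ioi 0) :=
    (continuousOn_const.sub (Real.continuous_exp.comp_continuousOn hdiv)).pow M
  have h1 : Continuous (fun y : ℝ => Real.exp (-y) * (1 - Real.exp (-y)) ^ n) := by
    continuity
  exact h1.continuousOn.mul h3

lemma integrableF (M n : ℕ) {t : ℝ} (ht : 0 < t) :
    IntegrableOn (fun y : ℝ =>
      Real.exp (-y) * (1 - Real.exp (-y)) ^ n * (1 - Real.exp (-t / y)) ^ M)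
      (Ioi (0:ℝ)) := by
  have hexp : IntegrableOn (fun y : ℝ => Real.exp (-y)) (Ioi (0:ℝ)) := by
    simpa using exp_neg_integrableOn_Ioi 0 one_pos
  refine Integrable.mono hexp ((contF M n t).aestronglyMeasurable measurableSet_Ioi) ?_
  filter_upwards [ae_restrict_mem measurableSet_Ioi] with y hy
  have hy0 : 0 < y := hy
  have h1 : 0 ≤ 1 - Real.exp (-y) := aux0 hy0.le
  have h2 : 0 ≤ 1 - Real.exp (-(t/y)) := aux0 (by positivity)
  have h2' : 0 ≤ 1 - Real.exp (-t/y) := by rwa [neg_div]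
  rw [Real.norm_eq_abs, Real.norm_eq_abs, abs_of_nonneg (by positivity),
    abs_of_nonneg (Real.exp_pos _).le]
  calc Real.exp (-y) * (1 - Real.exp (-y)) ^ n * (1 - Real.exp (-t / y)) ^ M
      ≤ Real.exp (-y) * 1 ^ n * 1 ^ M := by
        gcongr <;> [exact aux2; (rw [neg_div]; exact aux2)]
    _ = Real.exp (-y) := by ring

lemma lowerBound (M m : ℕ) {t : ℝ} (ht : 0 < t) (ht1 : t ≤ 1) :
    Real.exp (-(m+1:ℝ)) * (1 - Real.exp (-1))^M / (m+1) * t^(m+1) ≤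
    ∫ y in Ioi (0:ℝ),
      Real.exp (-y) * (1 - Real.exp (-y)) ^ m * (1 - Real.exp (-t / y)) ^ M := by
  have hI := integrableF M m ht
  have hpos : 0 ≤ᵐ[volume.restrict (Ioi (0:ℝ))] (fun y : ℝ =>
      Real.exp (-y) * (1 - Real.exp (-y)) ^ m * (1 - Real.exp (-t / y)) ^ M) := by
    filter_upwards [ae_restrict_mem measurableSet_Ioi] with y hy
    have hy0 : 0 < y := hy
    have h1 : 0 ≤ 1 - Real.exp (-y) := aux0 hy0.le
    have h2 : 0 ≤ 1 - Real.exp (-t/y) := by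
      rw [neg_div]; exact aux0 (by positivity)
    positivity
  have hsub : ∫ y in Ioc (0:ℝ) t,
        Real.exp (-y) * (1 - Real.exp (-y)) ^ m * (1 - Real.exp (-t / y)) ^ M ≤
      ∫ y in Ioi (0:ℝ),
        Real.exp (-y) * (1 - Real.exp (-y)) ^ m * (1 - Real.exp (-t / y)) ^ M :=
    setIntegral_mono_set hI hpos (HasSubset.Subset.eventuallyLE (Ioc_subset_Ioi_self))
  refine le_trans ?_ hsub
  have hpt : ∀ y ∈ Ioc (0:ℝ) t,
      Real.exp (-(m+1:ℝ)) * (1 - Real.exp (-1))^M * y ^ m ≤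
      Real.exp (-y) * (1 - Real.exp (-y)) ^ m * (1 - Real.exp (-t / y)) ^ M := by
    intro y hy
    obtain ⟨hy0, hyt⟩ := hy
    have hy1 : y ≤ 1 := hyt.trans ht1
    have e1 : Real.exp (-1) ≤ Real.exp (-y) := Real.exp_le_exp.2 (by linarith)
    have hty : 1 ≤ t / y := (one_le_div hy0).2 hyt
    have e4 : (1 - Real.exp (-1))^M ≤ (1 - Real.exp (-t / y)) ^ M := by
      have h5 : Real.exp (-t/y) ≤ Real.exp (-1) := by
        rw [neg_div]; exact Real.exp_le_exp.2 (by linarith)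
      have h6 : Real.exp (-1) ≤ 1 := Real.exp_le_one_iff.2 (by norm_num)
      gcongr <;> linarith
    have hb : Real.exp (-1) * y ≤ 1 - Real.exp (-y) := by
      calc Real.exp (-1) * y ≤ Real.exp (-y) * y := by
            have := Real.exp_pos (-1); nlinarith
        _ ≤ 1 - Real.exp (-y) := by rw [mul_comm]; exact aux4
    have hb0 : 0 ≤ Real.exp (-1) * y := by positivity
    have e5 : (Real.exp (-1) * y) ^ m ≤ (1 - Real.exp (-y)) ^ m := by gcongr
    have h6 : Real.exp (-1) ≤ 1 := Real.exp_le_one_iff.2 (by norm_num)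
    have e14 : 0 ≤ (1 - Real.exp (-1))^M := pow_nonneg (by linarith) M
    calc Real.exp (-(m+1:ℝ)) * (1 - Real.exp (-1))^M * y ^ m
        = (Real.exp (-1) * (Real.exp (-1) * y) ^ m) * (1 - Real.exp (-1))^M := by
          rw [show (-(m+1:ℝ)) = (-1) + m * (-1) by push_cast; ring, Real.exp_add,
            Real.exp_nat_mul, mul_pow]; ring
      _ ≤ (Real.exp (-y) * (1 - Real.exp (-y)) ^ m) * (1 - Real.exp (-t / y)) ^ M := by
          have h7 : 0 ≤ (Real.exp (-1) * y) ^ m := by positivity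
          have h8 : 0 ≤ Real.exp (-y) := (Real.exp_pos _).le
          have h9 : 0 ≤ 1 - Real.exp (-y) := aux0 hy0.le
          exact mul_le_mul (mul_le_mul e1 e5 h7 h8) e4 e14
            (mul_nonneg h8 (pow_nonneg h9 m))
      _ = Real.exp (-y) * (1 - Real.exp (-y)) ^ m * (1 - Real.exp (-t / y)) ^ M := by ring
  have hIc : IntegrableOn (fun y : ℝ =>
      Real.exp (-y) * (1 - Real.exp (-y)) ^ m * (1 - Real.exp (-t / y)) ^ M) (Ioc 0 t) :=
    hI.mono_set Ioc_subset_Ioi_self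
  have hIlb : IntegrableOn (fun y : ℝ =>
      Real.exp (-(m+1:ℝ)) * (1 - Real.exp (-1))^M * y ^ m) (Ioc 0 t) := by
    apply Continuous.integrableOn_Ioc
    continuity
  have hmono := setIntegral_mono_on hIlb hIc measurableSet_Ioc hpt
  refine le_trans (le_of_eq ?_) hmono
  rw [MeasureTheory.integral_const_mul, ← intervalIntegral.integral_of_le ht.le,
    integral_pow]
  push_cast
  field_simp
  simp

lemma expDivIntegrable {t : ℝ} (ht : 0 < t) :
    IntegrableOn (fun y : ℝ => Real.exp (-y) / y) (Ioi t) := by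
  have hg : IntegrableOn (fun y : ℝ => (1/t) * Real.exp (-y)) (Ioi t) := by
    have := (exp_neg_integrableOn_Ioi t one_pos).const_mul (1/t)
    simpa [IntegrableOn] using this
  refine Integrable.mono hg ?_ ?_
  · refine ContinuousOn.aestronglyMeasurable ?_ measurableSet_Ioi
    exact (Real.continuous_exp.comp continuous_neg).continuousOn.div continuousOn_id
      (fun y hy => ne_of_gt (ht.trans hy))
  · filter_upwards [ae_restrict_mem measurableSet_Ioi] with y hy
    have hy0 : 0 < y := ht.trans hy
    have he := (Real.exp_pos (-y)).le
    rw [Real.norm_eq_abs, Real.norm_eq_abs, abs_of_nonneg (by positivity),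
      abs_of_nonneg (by positivity)]
    rw [div_le_iff₀ hy0]
    rw [mul_comm (1/t), mul_assoc]
    refine le_mul_of_one_le_right he ?_
    rw [one_div, ← div_eq_inv_mul, le_div_iff₀ ht]
    linarith [(show t < y from hy).le]

lemma expDivBound {t : ℝ} (ht : 0 < t) (ht1 : t ≤ 1) :
    ∫ y in Ioi t, Real.exp (-y) / y ≤ 1 - Real.log t := by
  have hsplit : Ioc t 1 ∪ Ioi (1:ℝ) = Ioi t := Ioc_union_Ioi_eq_Ioi ht1
  have hI1 : IntegrableOn (fun y : ℝ => Real.exp (-y) / y) (Ioc t 1) :=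
    (expDivIntegrable ht).mono_set Ioc_subset_Ioi_self
  have hI2 : IntegrableOn (fun y : ℝ => Real.exp (-y) / y) (Ioi 1) :=
    (expDivIntegrable ht).mono_set (Ioi_subset_Ioi ht1)
  rw [← hsplit, setIntegral_union (Ioc_disjoint_Ioi le_rfl) measurableSet_Ioi hI1 hI2]
  have hb1 : ∫ y in Ioc t 1, Real.exp (-y) / y ≤ - Real.log t := by
    have hIinv : IntegrableOn (fun y : ℝ => 1 / y) (Ioc t 1) := by
      refine (ContinuousOn.integrableOn_Icc ?_).mono_set Ioc_subset_Icc_self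
      exact continuousOn_const.div continuousOn_id
        (fun y hy => ne_of_gt (lt_of_lt_of_le ht hy.1))
    have hmono := setIntegral_mono_on hI1 hIinv measurableSet_Ioc (fun y hy => by
      have hy0 : 0 < y := ht.trans hy.1
      gcongr
      exact Real.exp_le_one_iff.2 (by linarith))
    refine hmono.trans (le_of_eq ?_)
    rw [← intervalIntegral.integral_of_le ht1, integral_one_div (by
      intro h
      rw [Set.uIcc_of_le ht1] at h
      exact absurd h.1 (not_le.2 ht)), one_div, Real.log_inv]
  have hb2 : ∫ y in Ioi (1:ℝ), Real.exp (-y) / y ≤ 1 := by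
    have hIexp : IntegrableOn (fun y : ℝ => Real.exp (-y)) (Ioi (1:ℝ)) := by
      simpa using exp_neg_integrableOn_Ioi 1 one_pos
    have hmono := setIntegral_mono_on hI2 hIexp measurableSet_Ioi (fun y hy => by
      have hy1 : (1:ℝ) ≤ y := le_of_lt hy
      rw [div_le_iff₀ (by linarith)]
      exact le_mul_of_one_le_right (Real.exp_pos _).le hy1)
    refine hmono.trans ?_
    rw [integral_exp_neg_Ioi]
    exact Real.exp_le_one_iff.2 (by norm_num)
  linarith

lemma upperBound (M m : ℕ) (hMm : m + 1 ≤ M) {t : ℝ} (ht : 0 < t) (ht1 : t ≤ 1) :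
    ∫ y in Ioi (0:ℝ),
        Real.exp (-y) * (1 - Real.exp (-y)) ^ m * (1 - Real.exp (-t / y)) ^ M
      ≤ t^(m+1) * (2 - Real.log t) := by
  have hI := integrableF M m ht
  have hIc : IntegrableOn (fun y : ℝ =>
      Real.exp (-y) * (1 - Real.exp (-y)) ^ m * (1 - Real.exp (-t / y)) ^ M) (Ioc 0 t) :=
    hI.mono_set Ioc_subset_Ioi_self
  have hIt : IntegrableOn (fun y : ℝ =>
      Real.exp (-y) * (1 - Real.exp (-y)) ^ m * (1 - Real.exp (-t / y)) ^ M) (Ioi t) :=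
    hI.mono_set (Ioi_subset_Ioi ht.le)
  have hsplit : Ioc 0 t ∪ Ioi t = Ioi (0:ℝ) := Ioc_union_Ioi_eq_Ioi ht.le
  rw [← hsplit, setIntegral_union (Ioc_disjoint_Ioi le_rfl) measurableSet_Ioi hIc hIt]
  have hb1 : ∫ y in Ioc (0:ℝ) t,
      Real.exp (-y) * (1 - Real.exp (-y)) ^ m * (1 - Real.exp (-t / y)) ^ M
      ≤ t^(m+1) := by
    have hIub : IntegrableOn (fun y : ℝ => y ^ m) (Ioc (0:ℝ) t) := by
      apply Continuous.integrableOn_Ioc; continuity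
    have hmono := setIntegral_mono_on hIc hIub measurableSet_Ioc (fun y hy => by
      obtain ⟨hy0, hyt⟩ := hy
      have h1 : 0 ≤ 1 - Real.exp (-y) := aux0 hy0.le
      have h2 : 0 ≤ 1 - Real.exp (-t/y) := by rw [neg_div]; exact aux0 (by positivity)
      have h2' : 1 - Real.exp (-t/y) ≤ 1 := by rw [neg_div]; exact aux2
      calc Real.exp (-y) * (1 - Real.exp (-y)) ^ m * (1 - Real.exp (-t / y)) ^ M
          ≤ 1 * y ^ m * 1 ^ M := by
            refine mul_le_mul (mul_le_mul (Real.exp_le_one_iff.2 (by linarith)) ?_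
              (pow_nonneg h1 m) zero_le_one) ?_ (pow_nonneg h2 M) ?_
            · exact pow_le_pow_left₀ h1 aux3 m
            · exact pow_le_pow_left₀ h2 h2' M
            · positivity
        _ = y ^ m := by ring)
    refine hmono.trans ?_
    rw [← intervalIntegral.integral_of_le ht.le, integral_pow, zero_pow (by omega), sub_zero]
    refine div_le_self (pow_nonneg ht.le _) ?_
    push_cast
    linarith [Nat.cast_nonneg (α := ℝ) m]
  have hb2 : ∫ y in Ioi t,
      Real.exp (-y) * (1 - Real.exp (-y)) ^ m * (1 - Real.exp (-t / y)) ^ M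
      ≤ t^(m+1) * (1 - Real.log t) := by
    have hub : IntegrableOn (fun y : ℝ => t^(m+1) * (Real.exp (-y)/y)) (Ioi t) :=
      (expDivIntegrable ht).const_mul _
    have hmono := setIntegral_mono_on hIt hub measurableSet_Ioi (fun y hy => by
      have hy0 : 0 < y := ht.trans hy
      have h1 : 0 ≤ 1 - Real.exp (-y) := aux0 hy0.le
      have h2 : 0 ≤ 1 - Real.exp (-t/y) := by rw [neg_div]; exact aux0 (by positivity)
      have h2' : 1 - Real.exp (-t/y) ≤ 1 := by rw [neg_div]; exact aux2
      have h3 : 1 - Real.exp (-t/y) ≤ t/y := by rw [neg_div]; exact aux3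
      calc Real.exp (-y) * (1 - Real.exp (-y)) ^ m * (1 - Real.exp (-t / y)) ^ M
          ≤ Real.exp (-y) * y ^ m * (t/y) ^ (m+1) := by
            refine mul_le_mul (mul_le_mul le_rfl (pow_le_pow_left₀ h1 aux3 m)
              (pow_nonneg h1 m) (Real.exp_pos _).le) ?_ (pow_nonneg h2 M) (by positivity)
            calc (1 - Real.exp (-t / y)) ^ M ≤ (1 - Real.exp (-t / y)) ^ (m+1) :=
                  pow_le_pow_of_le_one h2 h2' hMm
              _ ≤ (t/y) ^ (m+1) := pow_le_pow_left₀ h2 h3 (m+1)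
        _ = t^(m+1) * (Real.exp (-y)/y) := by
            rw [div_pow, pow_succ y m]
            field_simp)
    refine hmono.trans ?_
    rw [MeasureTheory.integral_const_mul]
    exact mul_le_mul_of_nonneg_left (expDivBound ht ht1) (pow_nonneg ht.le _)
  have hring : t^(m+1) * (2 - Real.log t) = t^(m+1) + t^(m+1) * (1 - Real.log t) := by ring
  linarith

lemma tendsto_log_aux (c : ℝ) (hc : 0 < c) :
    Tendsto (fun u : ℝ => Real.log (c * (2 + u)) / u) atTop (𝓝 0) := by
  have h1 : Tendsto (fun u : ℝ => c * (2 + u)) atTop atTop :=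
    (tendsto_atTop_add_const_left _ 2 tendsto_id).const_mul_atTop hc
  have h2 : (fun u : ℝ => Real.log (c * (2 + u))) =o[atTop] fun u => c * (2 + u) := by
    simpa [Function.comp_def] using Real.isLittleO_log_id_atTop.comp_tendsto h1
  have h3 : (fun u : ℝ => c * (2 + u)) =O[atTop] (fun u : ℝ => u) := by
    apply Asymptotics.IsBigO.of_bound (3*c)
    filter_upwards [eventually_ge_atTop (2:ℝ)] with u hu
    rw [Real.norm_eq_abs, Real.norm_eq_abs, abs_of_nonneg (by nlinarith),
      abs_of_nonneg (by linarith)]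
    nlinarith
  have h4 := h2.trans_isBigO h3
  simpa using h4.tendsto_div_nhds_zero

lemma tendsto_log_aux2 (c : ℝ) (hc : 0 < c) :
    Tendsto (fun x : ℝ => Real.log (c * (2 - x)) / x) atBot (𝓝 0) := by
  have h := ((tendsto_log_aux c hc).neg).comp tendsto_neg_atBot_atTop
  simp only [Function.comp_def, neg_zero] at h
  convert h using 2 with x
  rw [div_neg, neg_neg, sub_eq_add_neg]

lemma tendsto_const_div_log (c : ℝ) :
    Tendsto (fun t : ℝ => c / Real.log t) (𝓝[>] 0) (𝓝 0) := by
  have h1 : Tendsto (fun t : ℝ => -Real.log t) (𝓝[>] 0) atTop :=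
    tendsto_neg_atBot_atTop.comp Real.tendsto_log_nhdsGT_zero
  have h2 := (h1.const_div_atTop c).neg
  simp only [neg_zero] at h2
  convert h2 using 2 with t
  rw [div_neg, neg_neg]

/-- Fix integers `1 ≤ n ≤ M` and define
`T(t) = n ∫₀^∞ e^{−y} (1 − e^{−y})^{n−1} (1 − e^{−t/y})^M dy` for `t > 0`. Then
`lim_{t→0⁺} log T(t)/log t = n`. -/
theorem stmt16 (M n : ℕ) (hn : 1 ≤ n) (hnM : n ≤ M) :
    Tendsto
      (fun t : ℝ =>
        Real.log
            ((n : ℝ) *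
              ∫ y in Set.Ioi (0 : ℝ),
                Real.exp (-y) * (1 - Real.exp (-y)) ^ (n - 1) * (1 - Real.exp (-t / y)) ^ M)
          / Real.log t)
      (𝓝[>] 0) (𝓝 n) := by
  obtain ⟨m, rfl⟩ : ∃ m, n = m + 1 := ⟨n - 1, by omega⟩
  simp only [Nat.add_sub_cancel]
  have hNpos : (0:ℝ) < ((m+1 : ℕ) : ℝ) := by positivity
  set N : ℝ := ((m+1 : ℕ) : ℝ) with hN
  have hexp1 : Real.exp (-1) < 1 := Real.exp_lt_one_iff.2 (by norm_num)
  have hc₁ : (0:ℝ) < Real.exp (-(m+1:ℝ)) * (1 - Real.exp (-1))^M / (m+1) := by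
    apply div_pos (mul_pos (Real.exp_pos _) (pow_pos (by linarith) M)) (by positivity)
  set c₁ : ℝ := Real.exp (-(m+1:ℝ)) * (1 - Real.exp (-1))^M / (m+1) with hc₁def
  have hC : (0:ℝ) < N * c₁ := mul_pos hNpos hc₁
  set C : ℝ := N * c₁ with hCdef
  have hlo : Tendsto (fun t : ℝ => N + Real.log (N * (2 - Real.log t)) / Real.log t)
      (𝓝[>] (0:ℝ)) (𝓝 N) := by
    have h := (tendsto_log_aux2 N hNpos).comp Real.tendsto_log_nhdsGT_zero
    have h2 := (tendsto_const_nhds (x := N)).add h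
    simpa [Function.comp_def] using h2
  have hhi : Tendsto (fun t : ℝ => N + Real.log C / Real.log t) (𝓝[>] (0:ℝ)) (𝓝 N) := by
    simpa using (tendsto_const_nhds (x := N)).add (tendsto_const_div_log (Real.log C))
  refine tendsto_of_tendsto_of_tendsto_of_le_of_le' hlo hhi ?_ ?_
  · -- lower eventual bound
    filter_upwards [Ioo_mem_nhdsGT_of_mem ⟨le_refl (0:ℝ), zero_lt_one⟩] with t ht
    obtain ⟨ht0, ht1⟩ := ht
    have hL : Real.log t < 0 := Real.log_neg ht0 ht1
    have hg_hi := upperBound M m hnM ht0 ht1.le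
    have hg_lo := lowerBound M m ht0 ht1.le
    have hT_lo : C * t^(m+1) ≤ N * ∫ y in Ioi (0:ℝ),
        Real.exp (-y) * (1 - Real.exp (-y)) ^ m * (1 - Real.exp (-t / y)) ^ M := by
      rw [hCdef, mul_assoc]
      exact mul_le_mul_of_nonneg_left hg_lo hNpos.le
    have hTpos : 0 < N * ∫ y in Ioi (0:ℝ),
        Real.exp (-y) * (1 - Real.exp (-y)) ^ m * (1 - Real.exp (-t / y)) ^ M :=
      lt_of_lt_of_le (by positivity) hT_lo
    have hU : (0:ℝ) < N * (2 - Real.log t) := by nlinarith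
    have hT_hi : N * (∫ y in Ioi (0:ℝ),
        Real.exp (-y) * (1 - Real.exp (-y)) ^ m * (1 - Real.exp (-t / y)) ^ M)
        ≤ (N * (2 - Real.log t)) * t^(m+1) := by
      calc N * (∫ y in Ioi (0:ℝ),
          Real.exp (-y) * (1 - Real.exp (-y)) ^ m * (1 - Real.exp (-t / y)) ^ M)
          ≤ N * (t^(m+1) * (2 - Real.log t)) := mul_le_mul_of_nonneg_left hg_hi hNpos.le
        _ = (N * (2 - Real.log t)) * t^(m+1) := by ring
    have hlog_hi : Real.log (N * ∫ y in Ioi (0:ℝ),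
        Real.exp (-y) * (1 - Real.exp (-y)) ^ m * (1 - Real.exp (-t / y)) ^ M)
        ≤ Real.log (N * (2 - Real.log t)) + (m+1 : ℕ) * Real.log t := by
      rw [← Real.log_pow, ← Real.log_mul hU.ne' (by positivity)]
      exact Real.log_le_log hTpos hT_hi
    have hdiv := (div_le_div_right_of_neg hL).2 hlog_hi
    refine le_trans (le_of_eq ?_) hdiv
    rw [add_div, mul_div_assoc, div_self hL.ne, mul_one, add_comm, hN]
  · -- upper eventual bound
    filter_upwards [Ioo_mem_nhdsGT_of_mem ⟨le_refl (0:ℝ), zero_lt_one⟩] with t ht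
    obtain ⟨ht0, ht1⟩ := ht
    have hL : Real.log t < 0 := Real.log_neg ht0 ht1
    have hg_lo := lowerBound M m ht0 ht1.le
    have hT_lo : C * t^(m+1) ≤ N * ∫ y in Ioi (0:ℝ),
        Real.exp (-y) * (1 - Real.exp (-y)) ^ m * (1 - Real.exp (-t / y)) ^ M := by
      rw [hCdef, mul_assoc]
      exact mul_le_mul_of_nonneg_left hg_lo hNpos.le
    have hlog_lo : Real.log C + (m+1 : ℕ) * Real.log t ≤
        Real.log (N * ∫ y in Ioi (0:ℝ),
          Real.exp (-y) * (1 - Real.exp (-y)) ^ m * (1 - Real.exp (-t / y)) ^ M) := by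
      rw [← Real.log_pow, ← Real.log_mul hC.ne' (by positivity)]
      exact Real.log_le_log (by positivity) hT_lo
    have hdiv := (div_le_div_right_of_neg hL).2 hlog_lo
    refine le_trans hdiv (le_of_eq ?_)
    rw [add_div, mul_div_assoc, div_self hL.ne, mul_one, add_comm, hN]
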